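/- Let f₁, f₂ ∈ ℝ² and let s be a real number with s > dist(f₁, f₂) and s > 0, and let E := {p ∈ ℝ² : dist(p, f₁) + dist(p, f₂) = s} be the corresponding ellipse. Suppose the origin (0,0) does not belong to E. Then there exists a unique quintuple (a, b, c, d, e) ∈ ℝ⁵ such that every point (x, y) ∈ E satisfies a·x² + b·y² + c·x·y + d·x + e·y + 1 = 0. -/

import Mathlib

noncomputable def pt (x y : ℝ) : EuclideanSpace ℝ (Fin 2) := (WithLp.equiv 2 _).symm ![x, y]

lemma pt0 (x y : ℝ) : pt x y 0 = x := rfl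
lemma pt1 (x y : ℝ) : pt x y 1 = y := rfl

lemma pt_zero : pt 0 0 = (0 : EuclideanSpace ℝ (Fin 2)) := by
  ext i; fin_cases i <;> rfl

lemma pt_eta (p : EuclideanSpace ℝ (Fin 2)) : p = pt (p 0) (p 1) := by
  ext i; fin_cases i <;> rfl

lemma dist2 (x y : EuclideanSpace ℝ (Fin 2)) :
    dist x y = Real.sqrt ((x 0 - y 0)^2 + (x 1 - y 1)^2) := by
  rw [EuclideanSpace.dist_eq, Fin.sum_univ_two, Real.dist_eq, Real.dist_eq, sq_abs, sq_abs]

lemma uniq_aux (a b m₁ m₂ u₁ u₂ A B C D E : ℝ) (ha : 0 < a) (hb : 0 < b)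
    (hu : u₁^2 + u₂^2 = 1)
    (hQ : ∀ ct st : ℝ, ct^2 + st^2 = 1 →
      A*(m₁ + a*ct*u₁ - b*st*u₂)^2 + B*(m₂ + a*ct*u₂ + b*st*u₁)^2
      + C*(m₁ + a*ct*u₁ - b*st*u₂)*(m₂ + a*ct*u₂ + b*st*u₁)
      + D*(m₁ + a*ct*u₁ - b*st*u₂) + E*(m₂ + a*ct*u₂ + b*st*u₁) = 0)
    (horigin : ¬ (b^2*(m₁*u₁ + m₂*u₂)^2 + a^2*(m₁*u₂ - m₂*u₁)^2 = a^2*b^2)) :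
    A = 0 ∧ B = 0 ∧ C = 0 ∧ D = 0 ∧ E = 0 := by
  have q1 := hQ 1 0 (by norm_num)
  have q2 := hQ (-1) 0 (by norm_num)
  have q3 := hQ 0 1 (by norm_num)
  have q4 := hQ 0 (-1) (by norm_num)
  set w : ℝ := Real.sqrt 2 / 2 with hwd
  have hw : w^2 = 1/2 := by
    rw [hwd, div_pow, Real.sq_sqrt (by norm_num : (0:ℝ) ≤ 2)]; norm_num
  have q5 := hQ w w (by linear_combination 2*hw)
  have q6 := hQ w (-w) (by linear_combination 2*hw)
  have hD'a : (2*A*m₁*u₁ + 2*B*m₂*u₂ + C*(m₁*u₂ + m₂*u₁) + D*u₁ + E*u₂) * a = 0 := by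
    linear_combination (q1 - q2)/2
  have hD'0 : 2*A*m₁*u₁ + 2*B*m₂*u₂ + C*(m₁*u₂ + m₂*u₁) + D*u₁ + E*u₂ = 0 :=
    (mul_eq_zero.mp hD'a).resolve_right ha.ne'
  have hE'b : (-2*A*m₁*u₂ + 2*B*m₂*u₁ + C*(m₁*u₁ - m₂*u₂) - D*u₂ + E*u₁) * b = 0 := by
    linear_combination (q3 - q4)/2
  have hE'0 : -2*A*m₁*u₂ + 2*B*m₂*u₁ + C*(m₁*u₁ - m₂*u₂) - D*u₂ + E*u₁ = 0 :=
    (mul_eq_zero.mp hE'b).resolve_right hb.ne'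
  have hC'ab : (-2*A*u₁*u₂ + 2*B*u₁*u₂ + C*(u₁^2 - u₂^2)) * (a*b) = 0 := by
    linear_combination q5 - q6 - 2*w*hE'b
      - 2*((-2*A*u₁*u₂ + 2*B*u₁*u₂ + C*(u₁^2 - u₂^2))*(a*b))*hw
  have hC'0 : -2*A*u₁*u₂ + 2*B*u₁*u₂ + C*(u₁^2 - u₂^2) = 0 :=
    (mul_eq_zero.mp hC'ab).resolve_right (mul_pos ha hb).ne'
  have hA'F : (A*u₁^2 + B*u₂^2 + C*u₁*u₂)*a^2
      + (A*m₁^2 + B*m₂^2 + C*m₁*m₂ + D*m₁ + E*m₂) = 0 := by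
    linear_combination (q1 + q2)/2
  have hB'F : (A*u₂^2 + B*u₁^2 - C*u₁*u₂)*b^2
      + (A*m₁^2 + B*m₂^2 + C*m₁*m₂ + D*m₁ + E*m₂) = 0 := by
    linear_combination (q3 + q4)/2
  have hx0 : m₁ - (m₁*u₁ + m₂*u₂)*u₁ - (m₁*u₂ - m₂*u₁)*u₂ = 0 := by
    linear_combination (-m₁)*hu
  have hy0 : m₂ - (m₁*u₁ + m₂*u₂)*u₂ + (m₁*u₂ - m₂*u₁)*u₁ = 0 := by
    linear_combination (-m₂)*hu
  have horg : (A*u₁^2 + B*u₂^2 + C*u₁*u₂)*(m₁*u₁ + m₂*u₂)^2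
      + (A*u₂^2 + B*u₁^2 - C*u₁*u₂)*(m₁*u₂ - m₂*u₁)^2
      - (-2*A*u₁*u₂ + 2*B*u₁*u₂ + C*(u₁^2 - u₂^2))*(m₁*u₁ + m₂*u₂)*(m₁*u₂ - m₂*u₁)
      - (2*A*m₁*u₁ + 2*B*m₂*u₂ + C*(m₁*u₂ + m₂*u₁) + D*u₁ + E*u₂)*(m₁*u₁ + m₂*u₂)
      + (-2*A*m₁*u₂ + 2*B*m₂*u₁ + C*(m₁*u₁ - m₂*u₂) - D*u₂ + E*u₁)*(m₁*u₂ - m₂*u₁)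
      + (A*m₁^2 + B*m₂^2 + C*m₁*m₂ + D*m₁ + E*m₂) = 0 := by
    linear_combination
      (A*(m₁ - (m₁*u₁ + m₂*u₂)*u₁ - (m₁*u₂ - m₂*u₁)*u₂)
        + C*(m₂ - (m₁*u₁ + m₂*u₂)*u₂ + (m₁*u₂ - m₂*u₁)*u₁) + D)*hx0
      + (B*(m₂ - (m₁*u₁ + m₂*u₂)*u₂ + (m₁*u₂ - m₂*u₁)*u₁) + E)*hy0
  have hA'B' : (A*u₁^2 + B*u₂^2 + C*u₁*u₂)*a^2 - (A*u₂^2 + B*u₁^2 - C*u₁*u₂)*b^2 = 0 := by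
    linear_combination hA'F - hB'F
  have hB'0 : A*u₂^2 + B*u₁^2 - C*u₁*u₂ = 0 := by
    by_contra hB
    have hrel : (A*u₂^2 + B*u₁^2 - C*u₁*u₂)
        * (b^2*(m₁*u₁ + m₂*u₂)^2 + a^2*(m₁*u₂ - m₂*u₁)^2 - a^2*b^2) = 0 := by
      linear_combination a^2*horg - (m₁*u₁ + m₂*u₂)^2*hA'B'
        + a^2*(m₁*u₁ + m₂*u₂)*(m₁*u₂ - m₂*u₁)*hC'0
        + a^2*(m₁*u₁ + m₂*u₂)*hD'0 - a^2*(m₁*u₂ - m₂*u₁)*hE'0 - a^2*hB'F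
    have hcirc := (mul_eq_zero.mp hrel).resolve_left hB
    exact horigin (by linear_combination hcirc)
  have hF'0 : A*m₁^2 + B*m₂^2 + C*m₁*m₂ + D*m₁ + E*m₂ = 0 := by
    linear_combination hB'F - b^2*hB'0
  have hA'a : (A*u₁^2 + B*u₂^2 + C*u₁*u₂)*a^2 = 0 := by linear_combination hA'F - hF'0
  have hA'0 : A*u₁^2 + B*u₂^2 + C*u₁*u₂ = 0 :=
    (mul_eq_zero.mp hA'a).resolve_right (pow_ne_zero 2 ha.ne')
  have hA0 : A = 0 := by
    linear_combination u₁^2*hA'0 + u₂^2*hB'0 - u₁*u₂*hC'0 - (A*(u₁^2 + u₂^2 + 1))*hu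
  have hB0 : B = 0 := by
    linear_combination u₂^2*hA'0 + u₁^2*hB'0 + u₁*u₂*hC'0 - (B*(u₁^2 + u₂^2 + 1))*hu
  have hC0 : C = 0 := by
    linear_combination 2*u₁*u₂*hA'0 - 2*u₁*u₂*hB'0 + (u₁^2 - u₂^2)*hC'0
      - (C*(u₁^2 + u₂^2 + 1))*hu
  have hD0 : D = 0 := by
    linear_combination u₁*hD'0 - u₂*hE'0 - 2*m₁*hA0 - m₂*hC0 - (2*A*m₁ + C*m₂ + D)*hu
  have hE0 : E = 0 := by
    linear_combination u₂*hD'0 + u₁*hE'0 - 2*m₂*hB0 - m₁*hC0 - (2*B*m₂ + C*m₁ + E)*hu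
  exact ⟨hA0, hB0, hC0, hD0, hE0⟩

set_option maxHeartbeats 2000000 in

/-- If the origin does not lie on an ellipse, there is a unique normalized conic
(with constant term 1) vanishing on the ellipse. -/
theorem existsUnique_normalized_conic (f₁ f₂ : EuclideanSpace ℝ (Fin 2)) (s : ℝ)
    (hs : s > dist f₁ f₂) (hs0 : s > 0)
    (h0 : (0 : EuclideanSpace ℝ (Fin 2)) ∉
      {p : EuclideanSpace ℝ (Fin 2) | dist p f₁ + dist p f₂ = s}) :
    ∃! coef : ℝ × ℝ × ℝ × ℝ × ℝ,
      ∀ p ∈ {p : EuclideanSpace ℝ (Fin 2) | dist p f₁ + dist p f₂ = s},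
        coef.1 * (p 0) ^ 2 + coef.2.1 * (p 1) ^ 2 + coef.2.2.1 * (p 0) * (p 1)
          + coef.2.2.2.1 * (p 0) + coef.2.2.2.2 * (p 1) + 1 = 0 := by
  obtain ⟨g₁, g₂, rfl⟩ : ∃ g₁ g₂, f₁ = pt g₁ g₂ :=
    ⟨f₁ 0, f₁ 1, by ext i; fin_cases i <;> rfl⟩
  obtain ⟨h₁, h₂, rfl⟩ : ∃ h₁ h₂, f₂ = pt h₁ h₂ :=
    ⟨f₂ 0, f₂ 1, by ext i; fin_cases i <;> rfl⟩
  obtain ⟨d, hd0, hdd, hd2⟩ : ∃ d : ℝ, 0 ≤ d ∧ dist (pt g₁ g₂) (pt h₁ h₂) = d ∧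
      d^2 = (g₁ - h₁)^2 + (g₂ - h₂)^2 := by
    refine ⟨dist (pt g₁ g₂) (pt h₁ h₂), dist_nonneg, rfl, ?_⟩
    rw [dist2, Real.sq_sqrt (by positivity)]
    simp only [pt0, pt1]
  rw [hdd] at hs
  obtain ⟨u₁, u₂, hu, rfl, rfl⟩ : ∃ u₁ u₂ : ℝ, u₁^2 + u₂^2 = 1 ∧
      h₁ = g₁ + d*u₁ ∧ h₂ = g₂ + d*u₂ := by
    by_cases hdz : d = 0
    · have hff : pt g₁ g₂ = pt h₁ h₂ := by rw [← dist_eq_zero, hdd]; exact hdz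
      have e1 : g₁ = h₁ := congrArg (fun p => p 0) hff
      have e2 : g₂ = h₂ := congrArg (fun p => p 1) hff
      exact ⟨1, 0, by norm_num, by rw [hdz, ← e1]; ring, by rw [hdz, ← e2]; ring⟩
    · refine ⟨(h₁ - g₁)/d, (h₂ - g₂)/d, ?_, by field_simp; ring, by field_simp; ring⟩
      field_simp
      linear_combination -hd2
  obtain ⟨b, hb2, hbpos⟩ : ∃ b : ℝ, b^2 = (s/2)^2 - (d/2)^2 ∧ 0 < b :=
    ⟨Real.sqrt ((s/2)^2 - (d/2)^2), Real.sq_sqrt (by nlinarith), Real.sqrt_pos.mpr (by nlinarith)⟩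
  have hmem : ∀ ct st : ℝ, ct^2 + st^2 = 1 →
      pt (g₁ + d/2*u₁ + s/2*ct*u₁ - b*st*u₂) (g₂ + d/2*u₂ + s/2*ct*u₂ + b*st*u₁) ∈
      {p : EuclideanSpace ℝ (Fin 2) |
        dist p (pt g₁ g₂) + dist p (pt (g₁ + d*u₁) (g₂ + d*u₂)) = s} := by
    intro ct st hcs
    have hct1 : ct^2 ≤ 1 := by nlinarith [sq_nonneg st]
    have hctl : -1 ≤ ct := by nlinarith
    have hctu : ct ≤ 1 := by nlinarith
    have hcp : 0 ≤ d*(1 + ct) := mul_nonneg hd0 (by linarith)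
    have hcm : 0 ≤ d*(1 - ct) := mul_nonneg hd0 (by linarith)
    have hpos1 : 0 ≤ s/2 + d/2*ct := by nlinarith
    have hpos2 : 0 ≤ s/2 - d/2*ct := by nlinarith
    have dA : dist (pt (g₁ + d/2*u₁ + s/2*ct*u₁ - b*st*u₂) (g₂ + d/2*u₂ + s/2*ct*u₂ + b*st*u₁))
        (pt g₁ g₂) = s/2 + d/2*ct := by
      rw [dist2]
      simp only [pt0, pt1]
      rw [show (g₁ + d/2*u₁ + s/2*ct*u₁ - b*st*u₂ - g₁)^2
          + (g₂ + d/2*u₂ + s/2*ct*u₂ + b*st*u₁ - g₂)^2 = (s/2 + d/2*ct)^2 from by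
        linear_combination ((d/2 + s/2*ct)^2 + b^2*st^2)*hu + st^2*hb2
          + ((s/2)^2 - (d/2)^2)*hcs]
      exact Real.sqrt_sq hpos1
    have dB : dist (pt (g₁ + d/2*u₁ + s/2*ct*u₁ - b*st*u₂) (g₂ + d/2*u₂ + s/2*ct*u₂ + b*st*u₁))
        (pt (g₁ + d*u₁) (g₂ + d*u₂)) = s/2 - d/2*ct := by
      rw [dist2]
      simp only [pt0, pt1]
      rw [show (g₁ + d/2*u₁ + s/2*ct*u₁ - b*st*u₂ - (g₁ + d*u₁))^2
          + (g₂ + d/2*u₂ + s/2*ct*u₂ + b*st*u₁ - (g₂ + d*u₂))^2 = (s/2 - d/2*ct)^2 from by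
        linear_combination ((s/2*ct - d/2)^2 + b^2*st^2)*hu + st^2*hb2
          + ((s/2)^2 - (d/2)^2)*hcs]
      exact Real.sqrt_sq hpos2
    show _ + _ = s
    rw [dA, dB]
    ring
  obtain ⟨r1, hr1d, hr1⟩ : ∃ r1 : ℝ, dist (0 : EuclideanSpace ℝ (Fin 2)) (pt g₁ g₂) = r1 ∧
      r1^2 = g₁^2 + g₂^2 := by
    refine ⟨_, rfl, ?_⟩
    rw [dist2, Real.sq_sqrt (by positivity)]
    simp only [pt0, pt1]
    show (0 - g₁)^2 + (0 - g₂)^2 = _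
    ring
  obtain ⟨r2, hr2d, hr2⟩ : ∃ r2 : ℝ, dist (0 : EuclideanSpace ℝ (Fin 2))
      (pt (g₁ + d*u₁) (g₂ + d*u₂)) = r2 ∧ r2^2 = (g₁ + d*u₁)^2 + (g₂ + d*u₂)^2 := by
    refine ⟨_, rfl, ?_⟩
    rw [dist2, Real.sq_sqrt (by positivity)]
    simp only [pt0, pt1]
    show (0 - (g₁ + d*u₁))^2 + (0 - (g₂ + d*u₂))^2 = _
    ring
  have hr1n : 0 ≤ r1 := hr1d ▸ dist_nonneg
  have hr2n : 0 ≤ r2 := hr2d ▸ dist_nonneg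
  have habs : |r1 - r2| ≤ d := by
    have h := abs_dist_sub_le (pt g₁ g₂) (pt (g₁ + d*u₁) (g₂ + d*u₂))
      (0 : EuclideanSpace ℝ (Fin 2))
    rw [dist_comm (pt g₁ g₂) (0 : EuclideanSpace ℝ (Fin 2)),
      dist_comm (pt (g₁ + d*u₁) (g₂ + d*u₂)) (0 : EuclideanSpace ℝ (Fin 2)),
      hr1d, hr2d, hdd] at h
    exact h
  obtain ⟨habs1, habs2⟩ := abs_sub_le_iff.mp habs
  have hne : r1 + r2 ≠ s := by
    intro hcon
    exact h0 (by simp only [Set.mem_setOf_eq]; rw [hr1d, hr2d]; exact hcon)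
  have hK : 4*s^2*(g₁^2 + g₂^2)
      - (s^2 + (g₁^2 + g₂^2 - ((g₁ + d*u₁)^2 + (g₂ + d*u₂)^2)))^2 ≠ 0 := by
    have hKfact : 4*s^2*(g₁^2 + g₂^2)
        - (s^2 + (g₁^2 + g₂^2 - ((g₁ + d*u₁)^2 + (g₂ + d*u₂)^2)))^2
        = (r1 + r2 - s)*((r2 + s) - r1)*((s + r1) - r2)*(s + r1 + r2) := by
      rw [← hr1, ← hr2]; ring
    rw [hKfact]
    have p1 : (0:ℝ) < (r2 + s) - r1 := by linarith
    have p2 : (0:ℝ) < (s + r1) - r2 := by linarith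
    have p3 : (0:ℝ) < s + r1 + r2 := by linarith
    exact mul_ne_zero (mul_ne_zero (mul_ne_zero (sub_ne_zero.mpr hne) p1.ne') p2.ne') p3.ne'
  have hmain : ∀ p ∈ {p : EuclideanSpace ℝ (Fin 2) | dist p (pt g₁ g₂) + dist p (pt (g₁ + d*u₁) (g₂ + d*u₂)) = s},
      ((4*s^2 - (2*(d*u₁))^2)/(4*s^2*(g₁^2 + g₂^2) - (s^2 + (g₁^2 + g₂^2 - ((g₁ + d*u₁)^2 + (g₂ + d*u₂)^2)))^2)) * (p 0)^2 + ((4*s^2 - (2*(d*u₂))^2)/(4*s^2*(g₁^2 + g₂^2) - (s^2 + (g₁^2 + g₂^2 - ((g₁ + d*u₁)^2 + (g₂ + d*u₂)^2)))^2)) * (p 1)^2 + ((-2*(2*(d*u₁))*(2*(d*u₂)))/(4*s^2*(g₁^2 + g₂^2) - (s^2 + (g₁^2 + g₂^2 - ((g₁ + d*u₁)^2 + (g₂ + d*u₂)^2)))^2)) * (p 0) * (p 1)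
        + ((-8*s^2*g₁ - 2*(2*(d*u₁))*(s^2 + (g₁^2 + g₂^2 - ((g₁ + d*u₁)^2 + (g₂ + d*u₂)^2))))/(4*s^2*(g₁^2 + g₂^2) - (s^2 + (g₁^2 + g₂^2 - ((g₁ + d*u₁)^2 + (g₂ + d*u₂)^2)))^2)) * (p 0) + ((-8*s^2*g₂ - 2*(2*(d*u₂))*(s^2 + (g₁^2 + g₂^2 - ((g₁ + d*u₁)^2 + (g₂ + d*u₂)^2))))/(4*s^2*(g₁^2 + g₂^2) - (s^2 + (g₁^2 + g₂^2 - ((g₁ + d*u₁)^2 + (g₂ + d*u₂)^2)))^2)) * (p 1) + 1 = 0 := by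
    intro p hp
    simp only [Set.mem_setOf_eq] at hp
    have hq1 : (dist p (pt g₁ g₂))^2 = (p 0 - g₁)^2 + (p 1 - g₂)^2 := by
      rw [dist2, Real.sq_sqrt (by positivity)]
      simp only [pt0, pt1]
    have hq2 : (dist p (pt (g₁ + d*u₁) (g₂ + d*u₂)))^2
        = (p 0 - (g₁ + d*u₁))^2 + (p 1 - (g₂ + d*u₂))^2 := by
      rw [dist2, Real.sq_sqrt (by positivity)]
      simp only [pt0, pt1]
    have hstep : (p 0 - (g₁ + d*u₁))^2 + (p 1 - (g₂ + d*u₂))^2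
        = (s - dist p (pt g₁ g₂))^2 := by
      rw [← hq2, show dist p (pt (g₁ + d*u₁) (g₂ + d*u₂)) = s - dist p (pt g₁ g₂) from by
        linarith]
    have hP : 4*s^2*((p 0 - g₁)^2 + (p 1 - g₂)^2)
        - (s^2 + (((p 0 - g₁)^2 + (p 1 - g₂)^2)
          - ((p 0 - (g₁ + d*u₁))^2 + (p 1 - (g₂ + d*u₂))^2)))^2 = 0 := by
      rw [hstep, ← hq1]
      ring
    field_simp
    linear_combination hP
  refine ⟨(((4*s^2 - (2*(d*u₁))^2)/(4*s^2*(g₁^2 + g₂^2) - (s^2 + (g₁^2 + g₂^2 - ((g₁ + d*u₁)^2 + (g₂ + d*u₂)^2)))^2)), ((4*s^2 - (2*(d*u₂))^2)/(4*s^2*(g₁^2 + g₂^2) - (s^2 + (g₁^2 + g₂^2 - ((g₁ + d*u₁)^2 + (g₂ + d*u₂)^2)))^2)), ((-2*(2*(d*u₁))*(2*(d*u₂)))/(4*s^2*(g₁^2 + g₂^2) - (s^2 + (g₁^2 + g₂^2 - ((g₁ + d*u₁)^2 + (g₂ + d*u₂)^2)))^2)), ((-8*s^2*g₁ - 2*(2*(d*u₁))*(s^2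 + (g₁^2 + g₂^2 - ((g₁ + d*u₁)^2 + (g₂ + d*u₂)^2))))/(4*s^2*(g₁^2 + g₂^2) - (s^2 + (g₁^2 + g₂^2 - ((g₁ + d*u₁)^2 + (g₂ + d*u₂)^2)))^2)), ((-8*s^2*g₂ - 2*(2*(d*u₂))*(s^2 + (g₁^2 + g₂^2 - ((g₁ + d*u₁)^2 + (g₂ + d*u₂)^2))))/(4*s^2*(g₁^2 + g₂^2) - (s^2 + (g₁^2 + g₂^2 - ((g₁ + d*u₁)^2 + (g₂ + d*u₂)^2)))^2))), fun p hp => hmain p hp, ?_⟩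
  rintro ⟨A₂, B₂, C₂, D₂, E₂⟩ hy
  obtain ⟨eA, eB, eC, eD, eE⟩ := uniq_aux (s/2) b (g₁ + d/2*u₁) (g₂ + d/2*u₂) u₁ u₂
    (A₂ - ((4*s^2 - (2*(d*u₁))^2)/(4*s^2*(g₁^2 + g₂^2) - (s^2 + (g₁^2 + g₂^2 - ((g₁ + d*u₁)^2 + (g₂ + d*u₂)^2)))^2))) (B₂ - ((4*s^2 - (2*(d*u₂))^2)/(4*s^2*(g₁^2 + g₂^2) - (s^2 + (g₁^2 + g₂^2 - ((g₁ + d*u₁)^2 + (g₂ + d*u₂)^2)))^2))) (C₂ - ((-2*(2*(d*u₁))*(2*(d*u₂)))/(4*s^2*(g₁^2 + g₂^2) - (s^2 + (g₁^2 + g₂^2 - ((g₁ + d*u₁)^2 + (g₂ + d*u₂)^2)))^2))) (D₂ - ((-8*s^2*g₁ - 2*(2*(d*u₁))*(s^2 + (g₁^2 + g₂^2 - ((g₁ + d*u₁)^2 + (g₂ + d*u₂)^2))))/(4*s^2*(g₁^2 + g₂^2) - (s^2 + (g₁^2 + g₂^2 - ((g₁ + d*u₁)^2 + (g₂ + d*u₂)^2)))^2)))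 (E₂ - ((-8*s^2*g₂ - 2*(2*(d*u₂))*(s^2 + (g₁^2 + g₂^2 - ((g₁ + d*u₁)^2 + (g₂ + d*u₂)^2))))/(4*s^2*(g₁^2 + g₂^2) - (s^2 + (g₁^2 + g₂^2 - ((g₁ + d*u₁)^2 + (g₂ + d*u₂)^2)))^2)))
    (by linarith) hbpos hu
    (by
      intro ct st hcs
      have t1 := hy _ (hmem ct st hcs)
      have t2 := hmain _ (hmem ct st hcs)
      simp only [pt0, pt1] at t1 t2
      linear_combination t1 - t2)
    (by
      intro hcon
      have hs2 : s/2 ≠ 0 := by positivity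
      have ex : s/2*((-((g₁ + d/2*u₁)*u₁ + (g₂ + d/2*u₂)*u₂))/(s/2)) = (-((g₁ + d/2*u₁)*u₁ + (g₂ + d/2*u₂)*u₂)) := by field_simp
      have ey : b*(((g₁ + d/2*u₁)*u₂ - (g₂ + d/2*u₂)*u₁)/b) = ((g₁ + d/2*u₁)*u₂ - (g₂ + d/2*u₂)*u₁) := by field_simp
      have hcs : ((-((g₁ + d/2*u₁)*u₁ + (g₂ + d/2*u₂)*u₂))/(s/2))^2 + (((g₁ + d/2*u₁)*u₂ - (g₂ + d/2*u₂)*u₁)/b)^2 = 1 := by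
        field_simp
        linear_combination 16*hcon
      have hm := hmem ((-((g₁ + d/2*u₁)*u₁ + (g₂ + d/2*u₂)*u₂))/(s/2)) (((g₁ + d/2*u₁)*u₂ - (g₂ + d/2*u₂)*u₁)/b) hcs
      have hXe : g₁ + d/2*u₁ + s/2*((-((g₁ + d/2*u₁)*u₁ + (g₂ + d/2*u₂)*u₂))/(s/2))*u₁ - b*(((g₁ + d/2*u₁)*u₂ - (g₂ + d/2*u₂)*u₁)/b)*u₂ = 0 := by
        rw [ex, ey]
        linear_combination (-(g₁ + d/2*u₁))*hu
      have hYe : g₂ + d/2*u₂ + s/2*((-((g₁ + d/2*u₁)*u₁ + (g₂ + d/2*u₂)*u₂))/(s/2))*u₂ + b*(((g₁ + d/2*u₁)*u₂ - (g₂ + d/2*u₂)*u₁)/b)*u₁ = 0 := by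
        rw [ex, ey]
        linear_combination (-(g₂ + d/2*u₂))*hu
      rw [hXe, hYe, pt_zero] at hm
      exact h0 hm)
  simp only [Prod.mk.injEq]
  exact ⟨by linarith, by linarith, by linarith, by linarith, by linarith⟩
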